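/- Let s(a) = 1/(1 + exp(-a)) be the logistic function. For any real numbers a and b, the Kullback–Leibler divergence between Bernoulli(s(a)) and Bernoulli(s(b)), namely D(a,b) = s(a)·log(s(a)/s(b)) + (1 - s(a))·log((1-s(a))/(1-s(b))), satisfies D(a,b) ≤ (a - b)^2 / 8. -/

import Mathlib

noncomputable def sig (t : ℝ) : ℝ := 1 / (1 + Real.exp (-t))

lemma one_add_exp_pos (t : ℝ) : 0 < 1 + Real.exp (-t) := by positivity

lemma sig_pos (t : ℝ) : 0 < sig t := by
  unfold sig; positivity

lemma one_sub_sig (t : ℝ) : 1 - sig t = Real.exp (-t) / (1 + Real.exp (-t)) := by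
  unfold sig
  field_simp
  ring

lemma one_sub_sig_pos (t : ℝ) : 0 < 1 - sig t := by
  rw [one_sub_sig]; positivity

lemma hasDerivAt_sig (t : ℝ) :
    HasDerivAt sig (Real.exp (-t) / (1 + Real.exp (-t)) ^ 2) t := by
  have h1 : HasDerivAt (fun t : ℝ => 1 + Real.exp (-t)) (-Real.exp (-t)) t := by
    have := (Real.hasDerivAt_exp (-t)).comp t ((hasDerivAt_id t).neg)
    simpa using (this.const_add 1)
  have h2 := h1.inv (ne_of_gt (one_add_exp_pos t))
  have : HasDerivAt (fun t : ℝ => (1 + Real.exp (-t))⁻¹)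
      (Real.exp (-t) / (1 + Real.exp (-t)) ^ 2) t := by
    exact h2.congr_deriv (by ring)
  have e : sig = fun t => (1 + Real.exp (-t))⁻¹ := by
    funext t; simp [sig, one_div]
  rw [e]; exact this

lemma sig_deriv_le (t : ℝ) : Real.exp (-t) / (1 + Real.exp (-t)) ^ 2 ≤ 1 / 4 := by
  have h : 0 < Real.exp (-t) := Real.exp_pos _
  rw [div_le_div_iff₀ (by positivity) (by norm_num)]
  nlinarith [sq_nonneg (1 - Real.exp (-t))]

lemma sig_lip {x y : ℝ} (h : y ≤ x) : sig x - sig y ≤ (x - y) / 4 := by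
  set f : ℝ → ℝ := fun t => t / 4 - sig t with hf
  have hder : ∀ t, HasDerivAt f (1 / 4 - Real.exp (-t) / (1 + Real.exp (-t)) ^ 2) t := by
    intro t
    exact ((hasDerivAt_id t).div_const 4).sub (hasDerivAt_sig t)
  have hmono : Monotone f := by
    apply monotone_of_deriv_nonneg
    · exact fun t => ((hder t).differentiableAt)
    · intro t
      rw [(hder t).deriv]
      linarith [sig_deriv_le t]
  have := hmono h
  simp only [hf] at this
  linarith

noncomputable def Fl (t : ℝ) : ℝ := Real.log (1 + Real.exp t)

lemma one_add_exp_pos' (t : ℝ) : 0 < 1 + Real.exp t := by positivity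

lemma hasDerivAt_Fl (t : ℝ) : HasDerivAt Fl (sig t) t := by
  have h1 : HasDerivAt (fun t : ℝ => 1 + Real.exp t) (Real.exp t) t := by
    simpa using (Real.hasDerivAt_exp t).const_add 1
  have h2 := h1.log (ne_of_gt (one_add_exp_pos' t))
  have : Real.exp t / (1 + Real.exp t) = sig t := by
    unfold sig
    rw [Real.exp_neg]
    field_simp
    ring
  have e : Fl = fun t => Real.log (1 + Real.exp t) := rfl
  rw [e, ← this]
  exact h2

lemma taylor_bound (a b : ℝ) : Fl b - Fl a - sig a * (b - a) ≤ (b - a) ^ 2 / 8 := by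
  set G : ℝ → ℝ := fun t => Fl t - Fl a - sig a * (t - a) - (t - a) ^ 2 / 8 with hG
  have hder : ∀ t, HasDerivAt G (sig t - sig a - (t - a) / 4) t := by
    intro t
    have h1 : HasDerivAt (fun t : ℝ => Fl t - Fl a) (sig t) t :=
      (hasDerivAt_Fl t).sub_const _
    have h2 : HasDerivAt (fun t : ℝ => sig a * (t - a)) (sig a) t := by
      simpa using ((hasDerivAt_id t).sub_const a).const_mul (sig a)
    have h3 : HasDerivAt (fun t : ℝ => (t - a) ^ 2 / 8) ((t - a) / 4) t := by
      have := (((hasDerivAt_id t).sub_const a).pow 2).div_const 8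
      exact this.congr_deriv (by norm_num [id] <;> ring)
    exact (h1.sub h2).sub h3
  have hGa : G a = 0 := by simp [hG]
  have key : G b ≤ 0 := by
    rcases le_total a b with hab | hab
    · have hanti : AntitoneOn G (Set.Ici a) := by
        apply antitoneOn_of_deriv_nonpos (convex_Ici a)
        · exact (fun t _ => ((hder t).differentiableAt.continuousAt.continuousWithinAt))
        · exact fun t _ => (hder t).differentiableAt.differentiableWithinAt
        · intro t ht
          rw [(hder t).deriv]
          rw [interior_Ici] at ht
          linarith [sig_lip (le_of_lt ht)]
      have := hanti (Set.self_mem_Ici) (Set.mem_Ici.mpr hab) hab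
      linarith [hGa ▸ this]
    · have hmono : MonotoneOn G (Set.Iic a) := by
        apply monotoneOn_of_deriv_nonneg (convex_Iic a)
        · exact (fun t _ => ((hder t).differentiableAt.continuousAt.continuousWithinAt))
        · exact fun t _ => (hder t).differentiableAt.differentiableWithinAt
        · intro t ht
          rw [(hder t).deriv]
          rw [interior_Iic] at ht
          linarith [sig_lip (le_of_lt ht)]
      have := hmono (Set.mem_Iic.mpr hab) (Set.self_mem_Iic) hab
      linarith [hGa ▸ this]
  simp only [hG] at key
  linarith

lemma log_sig (t : ℝ) : Real.log (sig t) = -Real.log (1 + Real.exp (-t)) := by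
  rw [sig, one_div, Real.log_inv]

lemma log_one_sub_sig (t : ℝ) :
    Real.log (1 - sig t) = -t - Real.log (1 + Real.exp (-t)) := by
  rw [one_sub_sig, Real.log_div (Real.exp_ne_zero _) (ne_of_gt (one_add_exp_pos t)),
    Real.log_exp]

lemma log_shift (t : ℝ) : Real.log (1 + Real.exp (-t)) = Fl t - t := by
  have h : (1 : ℝ) + Real.exp (-t) = (1 + Real.exp t) * Real.exp (-t) := by
    rw [add_mul, one_mul, ← Real.exp_add]
    simp [add_comm]
  rw [h, Real.log_mul (ne_of_gt (one_add_exp_pos' t)) (Real.exp_ne_zero _), Real.log_exp, Fl]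
  ring

/-- KL divergence between `Bernoulli (s a)` and `Bernoulli (s b)` for the
logistic sigmoid `s` is at most `(a - b)² / 8`. -/
theorem stmt2 (s : ℝ → ℝ) (hs : ∀ t, s t = 1 / (1 + Real.exp (-t))) (a b : ℝ) :
    s a * Real.log (s a / s b) + (1 - s a) * Real.log ((1 - s a) / (1 - s b))
      ≤ (a - b) ^ 2 / 8 := by
  have hsa : s a = sig a := hs a
  have hsb : s b = sig b := hs b
  rw [hsa, hsb]
  have h1 : Real.log (sig a / sig b) = Real.log (sig a) - Real.log (sig b) :=
    Real.log_div (ne_of_gt (sig_pos a)) (ne_of_gt (sig_pos b))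
  have h2 : Real.log ((1 - sig a) / (1 - sig b))
      = Real.log (1 - sig a) - Real.log (1 - sig b) :=
    Real.log_div (ne_of_gt (one_sub_sig_pos a)) (ne_of_gt (one_sub_sig_pos b))
  rw [h1, h2, log_sig, log_sig, log_one_sub_sig, log_one_sub_sig, log_shift, log_shift]
  have := taylor_bound a b
  nlinarith [sq_nonneg (a - b)]
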